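/- Let p be a prime and fix α ∈ (0,1). For any subset S ⊆ F_p^× × F_p of right vertices of G_p with |S| ≤ (α/2)·p², the set B(S,α) := { (a,c) ∈ F_p^× × F_p : the number of z ∈ F_p^× with (z·a, z + c) ∈ S is at least α·p } satisfies |B(S,α)| ≤ 4·|S| / (α²·p). -/

import Mathlib

open Finset

namespace GpSamplerAux

variable (p : ℕ) [Fact p.Prime] (S : Finset ((ZMod p)ˣ × ZMod p))

/-- degree of a left vertex into `S` -/
def deg (u : (ZMod p)ˣ × ZMod p) : ℕ :=
  (univ.filter (fun z : (ZMod p)ˣ =>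
    ((z * u.1, (z : ZMod p) + u.2) : (ZMod p)ˣ × ZMod p) ∈ S)).card

/-- the neighborhood finset -/
def nbr (u : (ZMod p)ˣ × ZMod p) : Finset (ZMod p)ˣ :=
  univ.filter (fun z : (ZMod p)ˣ =>
    ((z * u.1, (z : ZMod p) + u.2) : (ZMod p)ˣ × ZMod p) ∈ S)

lemma deg_eq_card_nbr (u : (ZMod p)ˣ × ZMod p) : deg p S u = (nbr p S u).card := rfl

lemma sum_deg : ∑ u : (ZMod p)ˣ × ZMod p, deg p S u = Fintype.card (ZMod p)ˣ * S.card := by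
  classical
  have key : ∀ z : (ZMod p)ˣ,
      (univ.filter (fun u : (ZMod p)ˣ × ZMod p =>
        ((z * u.1, (z : ZMod p) + u.2) : (ZMod p)ˣ × ZMod p) ∈ S)).card = S.card := by
    intro z
    apply Finset.card_bij' (i := fun u _ => ((z * u.1, (z : ZMod p) + u.2) : (ZMod p)ˣ × ZMod p))
      (j := fun v _ => ((z⁻¹ * v.1, v.2 - (z : ZMod p)) : (ZMod p)ˣ × ZMod p))
    · intro u hu
      simpa using (mem_filter.mp hu).2
    · intro v hv
      simp only [mem_filter, mem_univ, true_and]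
      have hv' : ((z * (z⁻¹ * v.1), (z : ZMod p) + (v.2 - (z : ZMod p))) : (ZMod p)ˣ × ZMod p) = v :=
        Prod.ext (mul_inv_cancel_left z v.1) (by ring)
      rw [hv']
      exact hv
    · intro u hu
      exact Prod.ext (inv_mul_cancel_left z u.1) (by ring)
    · intro v hv
      exact Prod.ext (mul_inv_cancel_left z v.1) (by ring)
  calc ∑ u : (ZMod p)ˣ × ZMod p, deg p S u
      = ∑ u : (ZMod p)ˣ × ZMod p, ∑ z : (ZMod p)ˣ,
          (if ((z * u.1, (z : ZMod p) + u.2) : (ZMod p)ˣ × ZMod p) ∈ S then 1 else 0) := by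
        refine Finset.sum_congr rfl fun u _ => ?_
        simp only [deg]
        rw [Finset.card_filter]
    _ = ∑ z : (ZMod p)ˣ, ∑ u : (ZMod p)ˣ × ZMod p,
          (if ((z * u.1, (z : ZMod p) + u.2) : (ZMod p)ˣ × ZMod p) ∈ S then 1 else 0) :=
        Finset.sum_comm
    _ = ∑ z : (ZMod p)ˣ, S.card := by
        refine Finset.sum_congr rfl fun z _ => ?_
        rw [← Finset.card_filter]
        exact key z
    _ = Fintype.card (ZMod p)ˣ * S.card := by
        simp [Finset.sum_const, Finset.card_univ, mul_comm]

/-- pairs of S with distinct second coordinates -/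
def T : Finset (((ZMod p)ˣ × ZMod p) × ((ZMod p)ˣ × ZMod p)) :=
  (S ×ˢ S).filter (fun rr => rr.1.2 ≠ rr.2.2)

lemma sum_deg_sq_le :
    ∑ u : (ZMod p)ˣ × ZMod p, (deg p S u) ^ 2
      ≤ Fintype.card (ZMod p)ˣ * S.card + (T p S).card := by
  classical
  -- off-diagonal pair set for each u
  set off : ((ZMod p)ˣ × ZMod p) → Finset ((ZMod p)ˣ × (ZMod p)ˣ) :=
    fun u => ((nbr p S u) ×ˢ (nbr p S u)).filter (fun zz => zz.1 ≠ zz.2) with hoff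
  have hsplit : ∀ u, (deg p S u) ^ 2 = deg p S u + (off u).card := by
    intro u
    have h1 : (((nbr p S u) ×ˢ (nbr p S u)).filter (fun zz => zz.1 = zz.2)).card
        + (off u).card = (deg p S u) ^ 2 := by
      rw [hoff]
      rw [Finset.card_filter_add_card_filter_not]
      rw [Finset.card_product, deg_eq_card_nbr, sq]
    have h2 : (((nbr p S u) ×ˢ (nbr p S u)).filter (fun zz => zz.1 = zz.2)).card
        = deg p S u := by
      rw [deg_eq_card_nbr]
      have himg : ((nbr p S u) ×ˢ (nbr p S u)).filter (fun zz => zz.1 = zz.2)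
          = (nbr p S u).image (fun z => (z, z)) := by
        ext ⟨a, b⟩
        simp only [mem_filter, mem_product, mem_image, Prod.mk.injEq]
        constructor
        · rintro ⟨⟨ha, _⟩, hab⟩
          exact ⟨a, ha, rfl, hab⟩
        · rintro ⟨c, hc, rfl, rfl⟩
          exact ⟨⟨hc, hc⟩, rfl⟩
      rw [himg]
      exact Finset.card_image_of_injective _ (fun a b h => (Prod.ext_iff.mp h).1)
    omega
  have hsum2 : ∑ u : (ZMod p)ˣ × ZMod p, (off u).card ≤ (T p S).card := by
    rw [← Finset.card_sigma]
    apply Finset.card_le_card_of_injOn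
      (f := fun x => (((x.2.1 * x.1.1, (x.2.1 : ZMod p) + x.1.2) : (ZMod p)ˣ × ZMod p),
                      ((x.2.2 * x.1.1, (x.2.2 : ZMod p) + x.1.2) : (ZMod p)ˣ × ZMod p)))
    · rintro ⟨u, z, z'⟩ hx
      simp only [Finset.mem_coe, Finset.mem_sigma, mem_univ, true_and, hoff, mem_filter, mem_product,
        nbr, mem_univ, true_and] at hx
      obtain ⟨⟨hz, hz'⟩, hne⟩ := hx
      simp only [Finset.mem_coe, T, mem_filter, mem_product]
      refine ⟨⟨hz, hz'⟩, ?_⟩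
      simp only [ne_eq, add_left_inj]
      intro h
      exact hne (Units.ext h)
    · rintro ⟨u, z, z'⟩ hx ⟨v, w, w'⟩ hy hxy
      simp only [Finset.coe_sigma, Set.mem_sigma_iff, Finset.mem_coe, hoff, mem_filter,
        mem_product] at hx hy
      have hne : z ≠ z' := hx.2.2
      have hne' : w ≠ w' := hy.2.2
      simp only [Prod.mk.injEq] at hxy
      obtain ⟨⟨h1, h2⟩, h3, h4⟩ := hxy
      -- h1 : z * u.1 = w * v.1, h2 : z + u.2 = w + v.2
      -- h3 : z' * u.1 = w' * v.1, h4 : z' + u.2 = w' + v.2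
      -- ratio equality: z' * z⁻¹ = w' * w⁻¹
      have hrho : z' * z⁻¹ = w' * w⁻¹ := by
        have : z' * z⁻¹ * (z * u.1) = w' * w⁻¹ * (w * v.1) := by
          rw [mul_assoc, inv_mul_cancel_left, mul_assoc, inv_mul_cancel_left]
          exact h3
        rw [h1] at this
        exact mul_right_cancel this
      -- difference equality
      have hdiff : (z : ZMod p) - z' = (w : ZMod p) - w' := by
        linear_combination h2 - h4
      have hrho1 : ((z' * z⁻¹ : (ZMod p)ˣ) : ZMod p) ≠ 1 := by
        intro h
        have h1' : (z' * z⁻¹ : (ZMod p)ˣ) = 1 := Units.ext (by rw [Units.val_one]; exact h)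
        have h2' : z' = z := by rwa [mul_inv_eq_one] at h1'
        exact hne h2'.symm
      -- z' = ρ z, w' = ρ w in ZMod p
      set ρ : ZMod p := ((z' * z⁻¹ : (ZMod p)ˣ) : ZMod p) with hρ
      have hz' : (z' : ZMod p) = ρ * z := by
        rw [hρ, ← Units.val_mul, inv_mul_cancel_right]
      have hw' : (w' : ZMod p) = ρ * w := by
        rw [hρ, hrho, ← Units.val_mul, inv_mul_cancel_right]
      have hzw : (z : ZMod p) = w := by
        have h5 : (z : ZMod p) * (1 - ρ) = (w : ZMod p) * (1 - ρ) := by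
          rw [hz', hw'] at hdiff; linear_combination hdiff
        have h6 : (1 - ρ : ZMod p) ≠ 0 := sub_ne_zero.mpr (Ne.symm hrho1)
        exact mul_right_cancel₀ h6 h5
      have hzwu : z = w := Units.ext hzw
      have hz'w' : z' = w' := by
        apply Units.ext
        rw [hz', hw', hzw]
      subst hzwu
      have hu1 : u.1 = v.1 := mul_left_cancel h1
      have hu2 : u.2 = v.2 := by
        have := h2
        simpa using this
      have huv : u = v := Prod.ext hu1 hu2
      subst huv
      simp [hz'w']
  calc ∑ u : (ZMod p)ˣ × ZMod p, (deg p S u) ^ 2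
      = ∑ u : (ZMod p)ˣ × ZMod p, (deg p S u + (off u).card) := by
        exact Finset.sum_congr rfl fun u _ => hsplit u
    _ = (∑ u : (ZMod p)ˣ × ZMod p, deg p S u) + ∑ u : (ZMod p)ˣ × ZMod p, (off u).card :=
        Finset.sum_add_distrib
    _ ≤ Fintype.card (ZMod p)ˣ * S.card + (T p S).card := by
        rw [sum_deg]
        exact Nat.add_le_add_left hsum2 _

/-- fiber counts -/
def m (d0 : ZMod p) : ℕ := (S.filter (fun r => r.2 = d0)).card

lemma sum_m : ∑ d0 : ZMod p, m p S d0 = S.card := by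
  simp only [m]
  exact (Finset.card_eq_sum_card_fiberwise
    (f := fun r : (ZMod p)ˣ × ZMod p => r.2) (t := univ) (fun x _ => mem_univ _)).symm

lemma card_T : (T p S).card + ∑ d0 : ZMod p, (m p S d0) ^ 2 = S.card ^ 2 := by
  classical
  have hE : ((S ×ˢ S).filter (fun rr => rr.1.2 = rr.2.2)).card
      = ∑ d0 : ZMod p, (m p S d0) ^ 2 := by
    rw [Finset.card_eq_sum_card_fiberwise
      (f := fun rr => rr.1.2) (t := univ) (fun x _ => mem_univ _)]
    refine Finset.sum_congr rfl fun d0 _ => ?_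
    have : (((S ×ˢ S).filter (fun rr => rr.1.2 = rr.2.2)).filter (fun rr => rr.1.2 = d0))
        = (S.filter (fun r => r.2 = d0)) ×ˢ (S.filter (fun r => r.2 = d0)) := by
      ext ⟨r, r'⟩
      simp only [mem_filter, mem_product]
      constructor
      · rintro ⟨⟨⟨h1, h2⟩, h3⟩, h4⟩
        exact ⟨⟨h1, h4⟩, h2, h3 ▸ h4⟩
      · rintro ⟨⟨h1, h2⟩, h3, h4⟩
        exact ⟨⟨⟨h1, h3⟩, h2.trans h4.symm⟩, h2⟩
    rw [this, Finset.card_product, m, sq]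
  have := Finset.card_filter_add_card_filter_not
    (s := S ×ˢ S) (p := fun rr => rr.1.2 = rr.2.2)
  rw [Finset.card_product, ← sq] at this
  have hT : (T p S).card = ((S ×ˢ S).filter (fun rr => ¬ rr.1.2 = rr.2.2)).card := rfl
  omega

end GpSamplerAux

set_option maxHeartbeats 1000000 in
open GpSamplerAux in
/-- Sampler bound for `G_p`: fix `α ∈ (0,1)`. For any set `S` of right vertices with
`|S| ≤ (α/2)·p²`, the set `B(S,α)` of left vertices `(a,c)` having at least `α·p`
neighbors in `S` satisfies `|B(S,α)| ≤ 4·|S| / (α²·p)`. -/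
theorem Gp_sampler_bound (p : ℕ) [Fact p.Prime] (α : ℝ) (hα0 : 0 < α) (hα1 : α < 1)
    (S : Finset ((ZMod p)ˣ × ZMod p)) (hS : (S.card : ℝ) ≤ (α / 2) * (p : ℝ) ^ 2) :
    (Nat.card {u : (ZMod p)ˣ × ZMod p //
        α * (p : ℝ) ≤
          (Nat.card {z : (ZMod p)ˣ //
              ((z * u.1, (z : ZMod p) + u.2) : (ZMod p)ˣ × ZMod p) ∈ S} : ℝ)} : ℝ)
      ≤ 4 * (S.card : ℝ) / (α ^ 2 * (p : ℝ)) := by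
  classical
  have hp : p.Prime := Fact.out
  haveI : NeZero p := ⟨hp.ne_zero⟩
  have hP0 : (0 : ℝ) < p := by exact_mod_cast hp.pos
  set P : ℝ := (p : ℝ) with hPdef
  set s : ℝ := (S.card : ℝ) with hsdef
  have hs0 : 0 ≤ s := Nat.cast_nonneg _
  -- rewrite inner Nat.card
  have hinner : ∀ u : (ZMod p)ˣ × ZMod p,
      (Nat.card {z : (ZMod p)ˣ //
        ((z * u.1, (z : ZMod p) + u.2) : (ZMod p)ˣ × ZMod p) ∈ S}) = deg p S u := by
    intro u
    rw [Nat.card_eq_fintype_card, Fintype.card_subtype]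
    rfl
  set B : Finset ((ZMod p)ˣ × ZMod p) :=
    univ.filter (fun u => α * P ≤ (deg p S u : ℝ)) with hBdef
  have hBcard : (Nat.card {u : (ZMod p)ˣ × ZMod p //
      α * (p : ℝ) ≤
        (Nat.card {z : (ZMod p)ˣ //
            ((z * u.1, (z : ZMod p) + u.2) : (ZMod p)ˣ × ZMod p) ∈ S} : ℝ)}) = B.card := by
    rw [Nat.card_eq_fintype_card, Fintype.card_subtype]
    rw [hBdef]
    congr 1
    refine Finset.filter_congr fun u _ => ?_
    rw [hinner u]
  rw [hBcard]
  -- real versions of the counting facts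
  have hp1 : 1 ≤ p := hp.one_le
  have hk : ((Fintype.card (ZMod p)ˣ : ℕ) : ℝ) = P - 1 := by
    rw [ZMod.card_units]
    push_cast [Nat.cast_sub hp1]
    ring
  have hcardL : ((Fintype.card ((ZMod p)ˣ × ZMod p) : ℕ) : ℝ) = (P - 1) * P := by
    rw [Fintype.card_prod, ZMod.card]
    push_cast
    rw [hk]
  have hA : ∑ u : (ZMod p)ˣ × ZMod p, (deg p S u : ℝ) = (P - 1) * s := by
    rw [← Nat.cast_sum, sum_deg]
    push_cast
    rw [hk]
  set Tc : ℝ := ((T p S).card : ℝ) with hTcdef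
  have hQ : ∑ u : (ZMod p)ˣ × ZMod p, (deg p S u : ℝ) ^ 2 ≤ (P - 1) * s + Tc := by
    have h := sum_deg_sq_le p S
    have h' : ((∑ u : (ZMod p)ˣ × ZMod p, (deg p S u) ^ 2 : ℕ) : ℝ)
        ≤ ((Fintype.card (ZMod p)ˣ * S.card + (T p S).card : ℕ) : ℝ) := by exact_mod_cast h
    push_cast at h'
    rw [hk] at h'
    convert h' using 2
  set M : ℝ := ∑ d0 : ZMod p, ((m p S d0 : ℝ)) ^ 2 with hMdef
  have hTM : Tc + M = s ^ 2 := by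
    have h := card_T p S
    have h' : (((T p S).card + ∑ d0 : ZMod p, (m p S d0) ^ 2 : ℕ) : ℝ)
        = ((S.card ^ 2 : ℕ) : ℝ) := by exact_mod_cast h
    push_cast at h'
    exact h'
  have hM : s ^ 2 ≤ P * M := by
    have hcs := Finset.sum_mul_sq_le_sq_mul_sq (univ : Finset (ZMod p))
      (fun _ => (1 : ℝ)) (fun d0 => (m p S d0 : ℝ))
    have hsm : ∑ d0 : ZMod p, ((m p S d0 : ℝ)) = s := by
      rw [← Nat.cast_sum, sum_m]
    simp only [one_mul, one_pow] at hcs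
    rw [hsm, Finset.sum_const, Finset.card_univ, ZMod.card, nsmul_eq_mul, ← hMdef] at hcs
    linarith [hcs]
  set t : ℝ := s / P with htdef
  have ht : t * P = s := div_mul_cancel₀ s hP0.ne'
  have hVexp : ∑ u : (ZMod p)ˣ × ZMod p, ((deg p S u : ℝ) - t) ^ 2
      = (∑ u : (ZMod p)ˣ × ZMod p, (deg p S u : ℝ) ^ 2)
        - 2 * t * (∑ u : (ZMod p)ˣ × ZMod p, (deg p S u : ℝ))
        + ((P - 1) * P) * t ^ 2 := by
    have hterm : ∀ u : (ZMod p)ˣ × ZMod p,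
        ((deg p S u : ℝ) - t) ^ 2
          = ((deg p S u : ℝ) ^ 2 - (2 * t) * (deg p S u : ℝ)) + t ^ 2 := fun u => by ring
    rw [Finset.sum_congr rfl fun u _ => hterm u, Finset.sum_add_distrib,
      Finset.sum_sub_distrib, ← Finset.mul_sum, Finset.sum_const, Finset.card_univ,
      nsmul_eq_mul, hcardL]
  have hVle : ∑ u : (ZMod p)ˣ × ZMod p, ((deg p S u : ℝ) - t) ^ 2 ≤ s * P := by
    rw [hVexp, hA]
    have hs2 : s ^ 2 = t ^ 2 * P ^ 2 := by rw [← ht]; ring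
    have e2 : t ^ 2 * P ≤ M := by nlinarith [hM, hP0, hs2]
    have h2ts : 2 * t * ((P - 1) * s) = 2 * (P - 1) * (t ^ 2 * P) := by
      rw [← ht]; ring
    nlinarith [hQ, hTM, h2ts, hs2, e2, hs0]
  have htle : t ≤ α * P / 2 := by
    rw [htdef, div_le_iff₀ hP0]
    nlinarith [hS]
  have hBlow : ∀ u ∈ B, (α * P / 2) ^ 2 ≤ ((deg p S u : ℝ) - t) ^ 2 := by
    intro u hu
    have h1 : α * P ≤ (deg p S u : ℝ) := (mem_filter.mp hu).2
    have h2 : α * P / 2 ≤ (deg p S u : ℝ) - t := by linarith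
    have h3 : (0 : ℝ) ≤ α * P / 2 := by positivity
    exact pow_le_pow_left₀ h3 h2 2
  have hBsum : (B.card : ℝ) * (α * P / 2) ^ 2
      ≤ ∑ u : (ZMod p)ˣ × ZMod p, ((deg p S u : ℝ) - t) ^ 2 := by
    calc (B.card : ℝ) * (α * P / 2) ^ 2 = ∑ _u ∈ B, (α * P / 2) ^ 2 := by
          rw [Finset.sum_const, nsmul_eq_mul]
      _ ≤ ∑ u ∈ B, ((deg p S u : ℝ) - t) ^ 2 := Finset.sum_le_sum hBlow
      _ ≤ ∑ u : (ZMod p)ˣ × ZMod p, ((deg p S u : ℝ) - t) ^ 2 :=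
          Finset.sum_le_sum_of_subset_of_nonneg (Finset.subset_univ B)
            (fun i _ _ => sq_nonneg _)
  have hfin : (B.card : ℝ) * (α * P / 2) ^ 2 ≤ s * P := le_trans hBsum hVle
  rw [le_div_iff₀ (by positivity : (0 : ℝ) < α ^ 2 * P)]
  nlinarith [hfin, hP0, hα0, (Nat.cast_nonneg B.card : (0:ℝ) ≤ (B.card : ℝ))]
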